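/- Support of the eigenforms for the simple eigenvalues (part of Proposition 3.3, 'the eigenvectors are spanned by k∧m̄, k∧m, k∧u, k∧ℓ and m̄∧m'): let λ ∈ ℂ with λ ∉ {Ψ₂, conj(Ψ₂), Ψ₂⁰, −Ψ₂⁰}, and let v ∈ ℂ¹⁰ satisfy Mᵀ v = λ · v. Then v₄ = v₅ = v₈ = v₉ = v₁₀ = 0; that is, v lies in the span of the standard basis vectors e₁, e₂, e₃, e₆, e₇. -/

import Mathlib

open ComplexConjugate

/-- The Weyl curvature operator of a five-dimensional spacetime that is
algebraically special relative to an optical structure, written in the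
adapted basis of 2-forms (equation (A.1) of the paper). -/
noncomputable def weylOp (P2 P3 P31 P32 P4 P40 : ℂ) (P20 P30 : ℝ) :
    Matrix (Fin 10) (Fin 10) ℂ :=
  Matrix.of
    ![![P2, 0, 0, 0, 0, 0, 0, 0, 0, 0],
      ![0, conj P2, 0, 0, 0, 0, 0, 0, 0, 0],
      ![0, 0, (P20 : ℂ), 0, 0, 0, 0, 0, 0, 0],
      ![conj P32, 0, conj P31, -(P20 : ℂ), 0, 0, 0, 0, 0, 0],
      ![0, P32, P31, 0, -(P20 : ℂ), 0, 0, 0, 0, 0],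
      ![-P3, -conj P3, conj P32 + P32, 0, 0, -(P20 : ℂ) - P2 - conj P2,
        -P2 + conj P2, 0, 0, 0],
      ![-P3 + P31, conj P3 - conj P31, -P32 + conj P32, 0, 0, -P2 + conj P2,
        -P2 - conj P2 + (P20 : ℂ), 0, 0, 0],
      ![P4, (P30 : ℂ), P40, 0, conj P32, P3, P3 - P31, P2, 0, 0],
      ![(P30 : ℂ), conj P4, conj P40, P32, 0, conj P3, -conj P3 + conj P31, 0,
        conj P2, 0],
      ![P40, conj P40, -2 * (P30 : ℂ), P31, conj P31, -conj P32 - P32,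
        P32 - conj P32, 0, 0, (P20 : ℂ)]]

open Matrix

/-- Support of the eigenforms for the simple eigenvalues (part of
Proposition 3.3): any eigenvector of `Mᵀ` whose eigenvalue differs from
`Ψ₂, conj Ψ₂, Ψ₂⁰, −Ψ₂⁰` has vanishing components `4, 5, 8, 9, 10`, i.e. it
lies in the span of the 2-forms `k∧m̄, k∧m, k∧u, k∧ℓ, m̄∧m`. -/

private lemma expand10 (M : Matrix (Fin 10) (Fin 10) ℂ) (v : Fin 10 → ℂ) (i : Fin 10) :
    (Mᵀ *ᵥ v) i = M 0 i * v 0 + M 1 i * v 1 + M 2 i * v 2 + M 3 i * v 3 + M 4 i * v 4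
      + M 5 i * v 5 + M 6 i * v 6 + M 7 i * v 7 + M 8 i * v 8 + M 9 i * v 9 := by
  simp [Matrix.mulVec, dotProduct, Fin.sum_univ_succ, Fin.sum_univ_zero]
  norm_num [Fin.succ]
  ring_nf

/-- doc kept above in original theorem docstring -/
theorem weylOp_simple_eigenvector_support (P2 P3 P31 P32 P4 P40 : ℂ) (P20 P30 : ℝ)
    (lam : ℂ) (hlam1 : lam ≠ P2) (hlam2 : lam ≠ conj P2)
    (hlam3 : lam ≠ (P20 : ℂ)) (hlam4 : lam ≠ -(P20 : ℂ))
    (v : Fin 10 → ℂ)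
    (hv : (weylOp P2 P3 P31 P32 P4 P40 P20 P30)ᵀ *ᵥ v = lam • v) :
    v 3 = 0 ∧ v 4 = 0 ∧ v 7 = 0 ∧ v 8 = 0 ∧ v 9 = 0 := by
  have h7 := (expand10 _ v 7).symm.trans (congrFun hv 7)
  rw [show weylOp P2 P3 P31 P32 P4 P40 P20 P30 0 7 = (0 : ℂ) from rfl,
    show weylOp P2 P3 P31 P32 P4 P40 P20 P30 1 7 = (0 : ℂ) from rfl,
    show weylOp P2 P3 P31 P32 P4 P40 P20 P30 2 7 = (0 : ℂ) from rfl,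
    show weylOp P2 P3 P31 P32 P4 P40 P20 P30 3 7 = (0 : ℂ) from rfl,
    show weylOp P2 P3 P31 P32 P4 P40 P20 P30 4 7 = (0 : ℂ) from rfl,
    show weylOp P2 P3 P31 P32 P4 P40 P20 P30 5 7 = (0 : ℂ) from rfl,
    show weylOp P2 P3 P31 P32 P4 P40 P20 P30 6 7 = (0 : ℂ) from rfl,
    show weylOp P2 P3 P31 P32 P4 P40 P20 P30 7 7 = P2 from rfl,
    show weylOp P2 P3 P31 P32 P4 P40 P20 P30 8 7 = (0 : ℂ) from rfl,
    show weylOp P2 P3 P31 P32 P4 P40 P20 P30 9 7 = (0 : ℂ) from rfl,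
    show (lam • v) 7 = lam * v 7 from rfl] at h7
  have h8 := (expand10 _ v 8).symm.trans (congrFun hv 8)
  rw [show weylOp P2 P3 P31 P32 P4 P40 P20 P30 0 8 = (0 : ℂ) from rfl,
    show weylOp P2 P3 P31 P32 P4 P40 P20 P30 1 8 = (0 : ℂ) from rfl,
    show weylOp P2 P3 P31 P32 P4 P40 P20 P30 2 8 = (0 : ℂ) from rfl,
    show weylOp P2 P3 P31 P32 P4 P40 P20 P30 3 8 = (0 : ℂ) from rfl,
    show weylOp P2 P3 P31 P32 P4 P40 P20 P30 4 8 = (0 : ℂ) from rfl,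
    show weylOp P2 P3 P31 P32 P4 P40 P20 P30 5 8 = (0 : ℂ) from rfl,
    show weylOp P2 P3 P31 P32 P4 P40 P20 P30 6 8 = (0 : ℂ) from rfl,
    show weylOp P2 P3 P31 P32 P4 P40 P20 P30 7 8 = (0 : ℂ) from rfl,
    show weylOp P2 P3 P31 P32 P4 P40 P20 P30 8 8 = conj P2 from rfl,
    show weylOp P2 P3 P31 P32 P4 P40 P20 P30 9 8 = (0 : ℂ) from rfl,
    show (lam • v) 8 = lam * v 8 from rfl] at h8
  have h9 := (expand10 _ v 9).symm.trans (congrFun hv 9)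
  rw [show weylOp P2 P3 P31 P32 P4 P40 P20 P30 0 9 = (0 : ℂ) from rfl,
    show weylOp P2 P3 P31 P32 P4 P40 P20 P30 1 9 = (0 : ℂ) from rfl,
    show weylOp P2 P3 P31 P32 P4 P40 P20 P30 2 9 = (0 : ℂ) from rfl,
    show weylOp P2 P3 P31 P32 P4 P40 P20 P30 3 9 = (0 : ℂ) from rfl,
    show weylOp P2 P3 P31 P32 P4 P40 P20 P30 4 9 = (0 : ℂ) from rfl,
    show weylOp P2 P3 P31 P32 P4 P40 P20 P30 5 9 = (0 : ℂ) from rfl,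
    show weylOp P2 P3 P31 P32 P4 P40 P20 P30 6 9 = (0 : ℂ) from rfl,
    show weylOp P2 P3 P31 P32 P4 P40 P20 P30 7 9 = (0 : ℂ) from rfl,
    show weylOp P2 P3 P31 P32 P4 P40 P20 P30 8 9 = (0 : ℂ) from rfl,
    show weylOp P2 P3 P31 P32 P4 P40 P20 P30 9 9 = (P20 : ℂ) from rfl,
    show (lam • v) 9 = lam * v 9 from rfl] at h9
  have h3 := (expand10 _ v 3).symm.trans (congrFun hv 3)
  rw [show weylOp P2 P3 P31 P32 P4 P40 P20 P30 0 3 = (0 : ℂ) from rfl,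
    show weylOp P2 P3 P31 P32 P4 P40 P20 P30 1 3 = (0 : ℂ) from rfl,
    show weylOp P2 P3 P31 P32 P4 P40 P20 P30 2 3 = (0 : ℂ) from rfl,
    show weylOp P2 P3 P31 P32 P4 P40 P20 P30 3 3 = (-(P20 : ℂ)) from rfl,
    show weylOp P2 P3 P31 P32 P4 P40 P20 P30 4 3 = (0 : ℂ) from rfl,
    show weylOp P2 P3 P31 P32 P4 P40 P20 P30 5 3 = (0 : ℂ) from rfl,
    show weylOp P2 P3 P31 P32 P4 P40 P20 P30 6 3 = (0 : ℂ) from rfl,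
    show weylOp P2 P3 P31 P32 P4 P40 P20 P30 7 3 = (0 : ℂ) from rfl,
    show weylOp P2 P3 P31 P32 P4 P40 P20 P30 8 3 = P32 from rfl,
    show weylOp P2 P3 P31 P32 P4 P40 P20 P30 9 3 = P31 from rfl,
    show (lam • v) 3 = lam * v 3 from rfl] at h3
  have h4 := (expand10 _ v 4).symm.trans (congrFun hv 4)
  rw [show weylOp P2 P3 P31 P32 P4 P40 P20 P30 0 4 = (0 : ℂ) from rfl,
    show weylOp P2 P3 P31 P32 P4 P40 P20 P30 1 4 = (0 : ℂ) from rfl,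
    show weylOp P2 P3 P31 P32 P4 P40 P20 P30 2 4 = (0 : ℂ) from rfl,
    show weylOp P2 P3 P31 P32 P4 P40 P20 P30 3 4 = (0 : ℂ) from rfl,
    show weylOp P2 P3 P31 P32 P4 P40 P20 P30 4 4 = (-(P20 : ℂ)) from rfl,
    show weylOp P2 P3 P31 P32 P4 P40 P20 P30 5 4 = (0 : ℂ) from rfl,
    show weylOp P2 P3 P31 P32 P4 P40 P20 P30 6 4 = (0 : ℂ) from rfl,
    show weylOp P2 P3 P31 P32 P4 P40 P20 P30 7 4 = conj P32 from rfl,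
    show weylOp P2 P3 P31 P32 P4 P40 P20 P30 8 4 = (0 : ℂ) from rfl,
    show weylOp P2 P3 P31 P32 P4 P40 P20 P30 9 4 = conj P31 from rfl,
    show (lam • v) 4 = lam * v 4 from rfl] at h4
  have hv7 : v 7 = 0 := by
    rcases mul_eq_zero.mp (show (lam - P2) * v 7 = 0 by linear_combination -h7) with h | h
    · exact absurd (by linear_combination h) hlam1
    · exact h
  have hv8 : v 8 = 0 := by
    rcases mul_eq_zero.mp (show (lam - conj P2) * v 8 = 0 by linear_combination -h8) with h | h
    · exact absurd (by linear_combination h) hlam2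
    · exact h
  have hv9 : v 9 = 0 := by
    rcases mul_eq_zero.mp (show (lam - (P20 : ℂ)) * v 9 = 0 by linear_combination -h9) with h | h
    · exact absurd (by linear_combination h) hlam3
    · exact h
  refine ⟨?_, ?_, hv7, hv8, hv9⟩
  · rcases mul_eq_zero.mp (show (lam + (P20 : ℂ)) * v 3 = 0 by
        linear_combination -h3 + P32 * hv8 + P31 * hv9) with h | h
    · exact absurd (by linear_combination h) hlam4
    · exact h
  · rcases mul_eq_zero.mp (show (lam + (P20 : ℂ)) * v 4 = 0 by
        linear_combination -h4 + conj P32 * hv7 + conj P31 * hv9) with h | h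
    · exact absurd (by linear_combination h) hlam4
    · exact h
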